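/- Let d ≥ 1, let Λ : M_d(ℂ) → M_d(ℂ) be a bijective CPTP linear map, and let V : M_d(ℂ) → M_d(ℂ) be a trace-preserving, Hermiticity-preserving linear map that is NOT completely positive. Then there exist two states ρ', ρ'' on ℂ^{d+1} ⊗ ℂ^d, both lying in the image of the set of states under I_{d+1} ⊗ Λ, such that ‖(I_{d+1} ⊗ V)(ρ' − ρ'')‖₁ > ‖ρ' − ρ''‖₁. -/

import Mathlib

open Matrix Kronecker
open scoped ComplexOrder

/-- The trace norm of a complex matrix: the trace of the positive semidefinite
square root of `Aᴴ * A`. -/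
noncomputable def traceNorm {n : Type*} [Fintype n] [DecidableEq n]
    (A : Matrix n n ℂ) : ℝ :=
  (((Matrix.posSemidef_conjTranspose_mul_self A).1.eigenvectorUnitary.1 *
      diagonal (((↑) : ℝ → ℂ) ∘ (√·) ∘ (Matrix.posSemidef_conjTranspose_mul_self A).1.eigenvalues) *
      (star (Matrix.posSemidef_conjTranspose_mul_self A).1.eigenvectorUnitary :
        Matrix n n ℂ)).trace).re

/-- A state: a positive semidefinite matrix of trace one. -/
def IsState {n : Type*} [Fintype n] [DecidableEq n] (ρ : Matrix n n ℂ) : Prop :=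
  ρ.PosSemidef ∧ ρ.trace = 1

/-- A trace-preserving linear map on matrices. -/
def TracePreserving {d : ℕ} (Φ : Matrix (Fin d) (Fin d) ℂ →ₗ[ℂ] Matrix (Fin d) (Fin d) ℂ) : Prop :=
  ∀ A, (Φ A).trace = A.trace

/-- A Hermiticity-preserving linear map on matrices. -/
def HermPreserving {d : ℕ} (Φ : Matrix (Fin d) (Fin d) ℂ →ₗ[ℂ] Matrix (Fin d) (Fin d) ℂ) : Prop :=
  ∀ A, Φ Aᴴ = (Φ A)ᴴ

/-- The ampliation `I_n ⊗ Φ` of a linear map `Φ` on `d × d` matrices, acting blockwise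
on `n × n` block matrices with `d × d` blocks. -/
def ampliation {n d : ℕ} (Φ : Matrix (Fin d) (Fin d) ℂ →ₗ[ℂ] Matrix (Fin d) (Fin d) ℂ)
    (A : Matrix (Fin n × Fin d) (Fin n × Fin d) ℂ) :
    Matrix (Fin n × Fin d) (Fin n × Fin d) ℂ :=
  Matrix.of fun p q => Φ (Matrix.of fun i j => A (p.1, i) (q.1, j)) p.2 q.2

/-- A positive map: maps positive semidefinite matrices to positive semidefinite matrices. -/
def PositiveMap {d : ℕ} (Φ : Matrix (Fin d) (Fin d) ℂ →ₗ[ℂ] Matrix (Fin d) (Fin d) ℂ) : Prop :=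
  ∀ A, A.PosSemidef → (Φ A).PosSemidef

/-- A completely positive map: every ampliation `I_n ⊗ Φ` is a positive map. -/
def CompletelyPositive {d : ℕ}
    (Φ : Matrix (Fin d) (Fin d) ℂ →ₗ[ℂ] Matrix (Fin d) (Fin d) ℂ) : Prop :=
  ∀ n : ℕ, 1 ≤ n → ∀ A : Matrix (Fin n × Fin d) (Fin n × Fin d) ℂ,
    A.PosSemidef → (ampliation Φ A).PosSemidef

/-- A separable state on `ℂ^m ⊗ ℂ^d`: a finite convex combination of product states. -/
def SeparableState {m d : ℕ} (ρ : Matrix (Fin m × Fin d) (Fin m × Fin d) ℂ) : Prop :=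
  ∃ (k : ℕ) (w : Fin k → ℝ) (σ : Fin k → Matrix (Fin m) (Fin m) ℂ)
    (τ : Fin k → Matrix (Fin d) (Fin d) ℂ),
    (∀ i, 0 ≤ w i) ∧ (∑ i, w i) = 1 ∧ (∀ i, IsState (σ i)) ∧ (∀ i, IsState (τ i)) ∧
    ρ = ∑ i, (w i : ℂ) • (σ i ⊗ₖ τ i)
set_option linter.unusedSectionVars false

section PSDSqrt
open scoped MatrixOrder
variable {n : Type*} [Fintype n] [DecidableEq n]

/-- The square root of a positive semidefinite matrix, via its spectral decomposition. -/
noncomputable def Matrix.PosSemidef.sqrt {A : Matrix n n ℂ} (hA : A.PosSemidef) :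
    Matrix n n ℂ :=
  hA.1.eigenvectorUnitary.1 * diagonal (((↑) : ℝ → ℂ) ∘ (√·) ∘ hA.1.eigenvalues) *
    (star hA.1.eigenvectorUnitary : Matrix n n ℂ)

lemma Matrix.PosSemidef.sqrt_eq_cfc_sqrt {A : Matrix n n ℂ} (hA : A.PosSemidef) :
    hA.sqrt = CFC.sqrt A := by
  rw [CFC.sqrt_eq_cfc, cfc_nnreal_eq_real _ A hA.nonneg, hA.1.cfc_eq]
  simp only [IsHermitian.cfc, Unitary.conjStarAlgAut_apply, Matrix.PosSemidef.sqrt]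
  congr 2
  refine congrArg Matrix.diagonal (funext fun i => ?_)
  simp [Real.coe_sqrt, Real.coe_toNNReal', max_eq_left (hA.eigenvalues_nonneg i)]

lemma Matrix.PosSemidef.posSemidef_sqrt {A : Matrix n n ℂ} (hA : A.PosSemidef) :
    hA.sqrt.PosSemidef := by
  rw [hA.sqrt_eq_cfc_sqrt]
  exact (CFC.sqrt_nonneg A).posSemidef

lemma Matrix.PosSemidef.sqrt_mul_self {A : Matrix n n ℂ} (hA : A.PosSemidef) :
    hA.sqrt * hA.sqrt = A := by
  rw [hA.sqrt_eq_cfc_sqrt]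
  exact CFC.sqrt_mul_sqrt_self A hA.nonneg

lemma Matrix.PosSemidef.sq_sqrt {A : Matrix n n ℂ} (hA : A.PosSemidef) :
    hA.sqrt ^ 2 = A := by
  rw [sq, hA.sqrt_mul_self]

lemma Matrix.PosSemidef.eq_sqrt_of_sq_eq {A B : Matrix n n ℂ} (hB : B.PosSemidef)
    (hA : A.PosSemidef) (h : B ^ 2 = A) : B = hA.sqrt := by
  rw [hA.sqrt_eq_cfc_sqrt]
  exact (CFC.sqrt_unique (by rw [← sq, h]) hB.nonneg).symm

end PSDSqrt

section TN
open Matrix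
open scoped ComplexOrder
variable {n : Type*} [Fintype n] [DecidableEq n]

lemma traceNorm_eq_of_sq {A B : Matrix n n ℂ} (hB : B.PosSemidef)
    (h : B ^ 2 = Aᴴ * A) : traceNorm A = B.trace.re := by
  show (Matrix.posSemidef_conjTranspose_mul_self A).sqrt.trace.re = _
  rw [← hB.eq_sqrt_of_sq_eq (Matrix.posSemidef_conjTranspose_mul_self A) h]

lemma traceNorm_psd {ρ : Matrix n n ℂ} (hρ : ρ.PosSemidef) :
    traceNorm ρ = ρ.trace.re :=
  traceNorm_eq_of_sq hρ (by rw [pow_two, hρ.isHermitian.eq])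

lemma traceNorm_neg (A : Matrix n n ℂ) : traceNorm (-A) = traceNorm A := by
  have h := Matrix.posSemidef_conjTranspose_mul_self A
  rw [traceNorm_eq_of_sq h.posSemidef_sqrt (by rw [h.sq_sqrt]; simp)]
  rfl

end TN
section TN2
open Matrix
open scoped ComplexOrder
variable {n : Type*} [Fintype n] [DecidableEq n]

lemma psd_smul_real {A : Matrix n n ℂ} (hA : A.PosSemidef) {r : ℝ} (hr : 0 ≤ r) :
    ((r : ℂ) • A).PosSemidef := by
  refine Matrix.PosSemidef.of_dotProduct_mulVec_nonneg ?_ ?_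
  · unfold Matrix.IsHermitian
    rw [conjTranspose_smul, hA.isHermitian.eq]
    norm_num
  · intro x
    rw [smul_mulVec, dotProduct_smul]
    have h0 : (0:ℂ) ≤ (r:ℂ) := by
      rw [Complex.le_def]; simp [hr]
    calc (0:ℂ) = (r:ℂ) * 0 := by ring
    _ ≤ (r:ℂ) * (star x ⬝ᵥ A *ᵥ x) := by
        apply mul_le_mul_of_nonneg_left (hA.dotProduct_mulVec_nonneg x) h0
    _ = (r:ℂ) • (star x ⬝ᵥ A *ᵥ x) := by simp

lemma traceNorm_smul_real (A : Matrix n n ℂ) {r : ℝ} (hr : 0 ≤ r) :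
    traceNorm ((r : ℂ) • A) = r * traceNorm A := by
  have h := Matrix.posSemidef_conjTranspose_mul_self A
  have hB : ((r:ℂ) • h.sqrt).PosSemidef := psd_smul_real h.posSemidef_sqrt hr
  have hsq : ((r:ℂ) • h.sqrt) ^ 2 = ((r:ℂ) • A)ᴴ * ((r:ℂ) • A) := by
    rw [smul_pow, h.sq_sqrt, conjTranspose_smul, Matrix.smul_mul, Matrix.mul_smul,
      smul_smul, sq]
    congr 1
    simp [Complex.ext_iff]
  rw [traceNorm_eq_of_sq hB hsq, Matrix.trace_smul]
  show ((r:ℂ) * h.sqrt.trace).re = _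
  rw [Complex.mul_re]
  simp [traceNorm, Matrix.PosSemidef.sqrt]

end TN2
section TN3
open Matrix
open scoped ComplexOrder
variable {n : Type*} [Fintype n] [DecidableEq n]

lemma trace_conj_unitary (U : Matrix.unitaryGroup n ℂ) (D : Matrix n n ℂ) :
    ((U : Matrix n n ℂ) * D * (star U : Matrix n n ℂ)).trace = D.trace := by
  have h : (star U : Matrix n n ℂ) * (U : Matrix n n ℂ) = 1 := U.2.1
  rw [Matrix.trace_mul_cycle, h, Matrix.one_mul]

lemma conj_unitary_mul (U : Matrix.unitaryGroup n ℂ) (D₁ D₂ : Matrix n n ℂ) :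
    ((U : Matrix n n ℂ) * D₁ * (star U : Matrix n n ℂ)) *
      ((U : Matrix n n ℂ) * D₂ * (star U : Matrix n n ℂ))
    = (U : Matrix n n ℂ) * (D₁ * D₂) * (star U : Matrix n n ℂ) := by
  have h : (star U : Matrix n n ℂ) * (U : Matrix n n ℂ) = 1 := U.2.1
  simp only [Matrix.mul_assoc]
  rw [← Matrix.mul_assoc (star U : Matrix n n ℂ) (U : Matrix n n ℂ), h, Matrix.one_mul]

lemma hermitian_trace_eq_sum_eigen {A : Matrix n n ℂ} (hA : A.IsHermitian) :
    A.trace = (∑ i, (hA.eigenvalues i : ℂ)) := by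
  conv_lhs => rw [hA.spectral_theorem, Unitary.conjStarAlgAut_apply]
  rw [trace_conj_unitary, Matrix.trace_diagonal]
  rfl

lemma traceNorm_hermitian {A : Matrix n n ℂ} (hA : A.IsHermitian) :
    traceNorm A = ∑ i, |hA.eigenvalues i| := by
  have hB : ((hA.eigenvectorUnitary : Matrix n n ℂ) *
      Matrix.diagonal (fun i => ((|hA.eigenvalues i| : ℝ) : ℂ)) *
      (star hA.eigenvectorUnitary : Matrix n n ℂ)).PosSemidef := by
    apply Matrix.PosSemidef.mul_mul_conjTranspose_same
    refine Matrix.posSemidef_diagonal_iff.mpr fun i => ?_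
    rw [Complex.le_def]
    simp [abs_nonneg]
  have hsq : ((hA.eigenvectorUnitary : Matrix n n ℂ) *
      Matrix.diagonal (fun i => ((|hA.eigenvalues i| : ℝ) : ℂ)) *
      (star hA.eigenvectorUnitary : Matrix n n ℂ)) ^ 2 = Aᴴ * A := by
    rw [hA.eq, sq, conj_unitary_mul]
    conv_rhs => rw [hA.spectral_theorem, Unitary.conjStarAlgAut_apply]
    rw [conj_unitary_mul]
    congr 2
    rw [Matrix.diagonal_mul_diagonal, Matrix.diagonal_mul_diagonal]
    refine congrArg Matrix.diagonal (funext fun i => ?_)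
    show ((|hA.eigenvalues i| : ℝ) : ℂ) * ((|hA.eigenvalues i| : ℝ) : ℂ) = _
    rw [← Complex.ofReal_mul, abs_mul_abs_self, Complex.ofReal_mul]
    rfl
  rw [traceNorm_eq_of_sq hB hsq, trace_conj_unitary, Matrix.trace_diagonal, Complex.re_sum]
  simp

lemma hermitian_not_psd_exists_neg {A : Matrix n n ℂ} (hA : A.IsHermitian)
    (h : ¬ A.PosSemidef) : ∃ i, hA.eigenvalues i < 0 := by
  by_contra hc
  push_neg at hc
  exact h (hA.posSemidef_iff_eigenvalues_nonneg.mpr hc)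

lemma trace_re_lt_traceNorm_of_not_psd {A : Matrix n n ℂ} (hA : A.IsHermitian)
    (h : ¬ A.PosSemidef) : A.trace.re < traceNorm A := by
  obtain ⟨i, hi⟩ := hermitian_not_psd_exists_neg hA h
  rw [traceNorm_hermitian hA, hermitian_trace_eq_sum_eigen hA, Complex.re_sum]
  simp only [Complex.ofReal_re]
  refine Finset.sum_lt_sum (fun j _ => le_abs_self _) ⟨i, Finset.mem_univ i, ?_⟩
  rw [abs_of_neg hi]
  linarith

lemma trace_re_le_traceNorm {A : Matrix n n ℂ} (hA : A.IsHermitian) :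
    A.trace.re ≤ traceNorm A := by
  rw [traceNorm_hermitian hA, hermitian_trace_eq_sum_eigen hA, Complex.re_sum]
  simp only [Complex.ofReal_re]
  exact Finset.sum_le_sum (fun j _ => le_abs_self _)

end TN3
section TN4
open Matrix
open scoped ComplexOrder
variable {n : Type*} [Fintype n] [DecidableEq n]

lemma psd_row_zero {T : Matrix n n ℂ} (hT : T.PosSemidef) {p : n}
    (h : (T * T) p p = 0) (q : n) : T p q = 0 := by
  have hsym : ∀ r, T r p = star (T p r) := by
    intro r
    have := congrFun (congrFun hT.isHermitian.eq r) p
    rw [← this]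
    rfl
  have hsum : (∑ r, ((Complex.normSq (T p r) : ℝ) : ℂ)) = 0 := by
    rw [← h, Matrix.mul_apply]
    refine Finset.sum_congr rfl fun r _ => ?_
    rw [hsym r]
    rw [show star (T p r) = starRingEnd ℂ (T p r) from rfl, Complex.mul_conj]
  have hre : (∑ r, Complex.normSq (T p r)) = 0 := by
    have := congrArg Complex.re hsum
    rw [Complex.re_sum] at this
    simpa using this
  have hzero : ∀ r ∈ Finset.univ, Complex.normSq (T p r) = 0 := by
    rw [← Finset.sum_eq_zero_iff_of_nonneg (fun r _ => Complex.normSq_nonneg _)]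
    exact hre
  exact Complex.normSq_eq_zero.mp (hzero q (Finset.mem_univ q))

lemma conjTranspose_mul_self_support {X : Matrix n n ℂ} (P : n → Prop) [DecidablePred P]
    (hX : ∀ p q, (¬ P p ∨ ¬ P q) → X p q = 0) (p q : n) (h : ¬ P p ∨ ¬ P q) :
    (Xᴴ * X) p q = 0 := by
  rw [Matrix.mul_apply]
  refine Finset.sum_eq_zero fun r _ => ?_
  rcases h with h | h
  · rw [Matrix.conjTranspose_apply, hX r p (Or.inr h)]
    simp
  · rw [hX r q (Or.inr h)]
    simp

lemma sqrt_support {X : Matrix n n ℂ} (P : n → Prop) [DecidablePred P]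
    (hX : ∀ p q, (¬ P p ∨ ¬ P q) → X p q = 0) (p q : n) (h : ¬ P p ∨ ¬ P q) :
    (Matrix.posSemidef_conjTranspose_mul_self X).sqrt p q = 0 := by
  have hpsd := (Matrix.posSemidef_conjTranspose_mul_self X).posSemidef_sqrt
  have key : ∀ r, ¬ P r → ∀ s, (Matrix.posSemidef_conjTranspose_mul_self X).sqrt r s = 0 := by
    intro r hr s
    apply psd_row_zero hpsd _ s
    rw [(Matrix.posSemidef_conjTranspose_mul_self X).sqrt_mul_self]
    exact conjTranspose_mul_self_support P hX r r (Or.inl hr)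
  rcases h with h | h
  · exact key p h q
  · have h3 := congrFun (congrFun hpsd.isHermitian.eq p) q
    rw [← h3, Matrix.conjTranspose_apply, key q h p, star_zero]

lemma traceNorm_add_orth {X Z : Matrix n n ℂ} (P : n → Prop) [DecidablePred P]
    (hX : ∀ p q, (¬ P p ∨ ¬ P q) → X p q = 0)
    (hZ : ∀ p q, (P p ∨ P q) → Z p q = 0) :
    traceNorm (X + Z) = traceNorm X + traceNorm Z := by
  have hZ' : ∀ p q, (¬ (¬ P p) ∨ ¬ (¬ P q)) → Z p q = 0 := by
    intro p q h
    refine hZ p q ?_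
    rcases h with h | h
    · exact Or.inl (not_not.mp h)
    · exact Or.inr (not_not.mp h)
  have hS₁ := sqrt_support P hX
  have hS₂ := sqrt_support (fun p => ¬ P p) hZ'
  have hS₁S₂ : (Matrix.posSemidef_conjTranspose_mul_self X).sqrt *
      (Matrix.posSemidef_conjTranspose_mul_self Z).sqrt = 0 := by
    ext p q
    rw [Matrix.mul_apply]
    refine Finset.sum_eq_zero fun r _ => ?_
    by_cases hr : P r
    · rw [hS₂ r q (Or.inl (not_not.mpr hr)), mul_zero]
    · rw [hS₁ p r (Or.inr hr), zero_mul]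
  have hS₂S₁ : (Matrix.posSemidef_conjTranspose_mul_self Z).sqrt *
      (Matrix.posSemidef_conjTranspose_mul_self X).sqrt = 0 := by
    ext p q
    rw [Matrix.mul_apply]
    refine Finset.sum_eq_zero fun r _ => ?_
    by_cases hr : P r
    · rw [hS₂ p r (Or.inr (not_not.mpr hr)), zero_mul]
    · rw [hS₁ r q (Or.inl hr), mul_zero]
  have hXZ : Xᴴ * Z = 0 := by
    ext p q
    rw [Matrix.mul_apply]
    refine Finset.sum_eq_zero fun r _ => ?_
    by_cases hr : P r
    · rw [hZ r q (Or.inl hr), mul_zero]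
    · rw [Matrix.conjTranspose_apply, hX r p (Or.inl hr), star_zero, zero_mul]
  have hZX : Zᴴ * X = 0 := by
    ext p q
    rw [Matrix.mul_apply]
    refine Finset.sum_eq_zero fun r _ => ?_
    by_cases hr : P r
    · rw [Matrix.conjTranspose_apply, hZ r p (Or.inl hr), star_zero, zero_mul]
    · rw [hX r q (Or.inl hr), mul_zero]
  have hB : ((Matrix.posSemidef_conjTranspose_mul_self X).sqrt +
      (Matrix.posSemidef_conjTranspose_mul_self Z).sqrt).PosSemidef :=
    (Matrix.posSemidef_conjTranspose_mul_self X).posSemidef_sqrt.add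
      (Matrix.posSemidef_conjTranspose_mul_self Z).posSemidef_sqrt
  have hsq : ((Matrix.posSemidef_conjTranspose_mul_self X).sqrt +
      (Matrix.posSemidef_conjTranspose_mul_self Z).sqrt) ^ 2 = (X + Z)ᴴ * (X + Z) := by
    rw [sq, Matrix.add_mul, Matrix.mul_add, Matrix.mul_add, hS₁S₂, hS₂S₁,
      (Matrix.posSemidef_conjTranspose_mul_self X).sqrt_mul_self,
      (Matrix.posSemidef_conjTranspose_mul_self Z).sqrt_mul_self,
      Matrix.conjTranspose_add, Matrix.add_mul, Matrix.mul_add, Matrix.mul_add,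
      hXZ, hZX]
  rw [traceNorm_eq_of_sq hB hsq, Matrix.trace_add, Complex.add_re]
  rfl

end TN4
section Corner
open Matrix
open scoped ComplexOrder
variable {m n : Type*} [Fintype m] [DecidableEq m] [Fintype n] [DecidableEq n]

/-- Embedding of a `n × n` matrix into the `a`-corner of `(m × n) × (m × n)` matrices. -/
def cornerEmbed (a : m) (W : Matrix n n ℂ) : Matrix (m × n) (m × n) ℂ :=
  Matrix.of fun p q => if p.1 = a ∧ q.1 = a then W p.2 q.2 else 0

lemma cornerEmbed_apply (a : m) (W : Matrix n n ℂ) (p q : m × n) :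
    cornerEmbed a W p q = if p.1 = a ∧ q.1 = a then W p.2 q.2 else 0 := rfl

lemma cornerEmbed_mul (a : m) (W W' : Matrix n n ℂ) :
    cornerEmbed a W * cornerEmbed a W' = cornerEmbed a (W * W') := by
  ext p q
  rw [Matrix.mul_apply, cornerEmbed_apply]
  rw [Fintype.sum_prod_type]
  by_cases hp : p.1 = a
  · by_cases hq : q.1 = a
    · simp [cornerEmbed_apply, hp, hq, Matrix.mul_apply, ite_and, mul_ite, ite_mul,
        Finset.sum_ite_eq']
    · simp only [cornerEmbed_apply, hq, and_false, if_false, mul_zero,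
        Finset.sum_const_zero, if_neg (by simp [hq] : ¬ (p.1 = a ∧ q.1 = a))]
  · simp only [cornerEmbed_apply, hp, false_and, if_false, zero_mul,
      Finset.sum_const_zero, if_neg (by simp [hp] : ¬ (p.1 = a ∧ q.1 = a))]

lemma cornerEmbed_conjTranspose (a : m) (W : Matrix n n ℂ) :
    (cornerEmbed a W)ᴴ = cornerEmbed a Wᴴ := by
  ext p q
  rw [Matrix.conjTranspose_apply, cornerEmbed_apply, cornerEmbed_apply]
  by_cases h : p.1 = a ∧ q.1 = a
  · simp [h.1, h.2, Matrix.conjTranspose_apply]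
  · rw [if_neg h, if_neg (by tauto), star_zero]

lemma cornerEmbed_trace (a : m) (W : Matrix n n ℂ) :
    (cornerEmbed a W).trace = W.trace := by
  unfold Matrix.trace
  rw [Fintype.sum_prod_type]
  simp [Matrix.diag, cornerEmbed_apply, Finset.sum_ite_eq']

lemma cornerEmbed_psd (a : m) {W : Matrix n n ℂ} (hW : W.PosSemidef) :
    (cornerEmbed a W).PosSemidef := by
  refine Matrix.PosSemidef.of_dotProduct_mulVec_nonneg ?_ ?_
  · have h1 : (cornerEmbed a W)ᴴ = cornerEmbed a W := by
      rw [cornerEmbed_conjTranspose, hW.isHermitian.eq]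
    exact h1
  · intro x
    have hform : star x ⬝ᵥ (cornerEmbed a W) *ᵥ x
        = star (fun j => x (a, j)) ⬝ᵥ W *ᵥ (fun j => x (a, j)) := by
      simp only [dotProduct, Matrix.mulVec, cornerEmbed_apply,
        Fintype.sum_prod_type, Pi.star_apply, ite_and, ite_mul, zero_mul, mul_ite, mul_zero]
      simp [Finset.sum_ite_eq', Finset.mul_sum]
    rw [hform]
    exact hW.dotProduct_mulVec_nonneg _

lemma traceNorm_cornerEmbed (a : m) (W : Matrix n n ℂ) :
    traceNorm (cornerEmbed a W) = traceNorm W := by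
  have h := Matrix.posSemidef_conjTranspose_mul_self W
  have hB : (cornerEmbed a h.sqrt).PosSemidef := cornerEmbed_psd a h.posSemidef_sqrt
  have hsq : (cornerEmbed a h.sqrt) ^ 2 = (cornerEmbed a W)ᴴ * (cornerEmbed a W) := by
    rw [sq, cornerEmbed_mul, h.sqrt_mul_self, cornerEmbed_conjTranspose, cornerEmbed_mul]
  rw [traceNorm_eq_of_sq hB hsq, cornerEmbed_trace]
  rfl

end Corner
section Ampl
open Matrix
open scoped ComplexOrder
variable {n d : ℕ}

lemma ampliation_apply (Φ : Matrix (Fin d) (Fin d) ℂ →ₗ[ℂ] Matrix (Fin d) (Fin d) ℂ)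
    (A : Matrix (Fin n × Fin d) (Fin n × Fin d) ℂ) (p q : Fin n × Fin d) :
    ampliation Φ A p q = Φ (Matrix.of fun i j => A (p.1, i) (q.1, j)) p.2 q.2 := rfl

lemma ampliation_sub (Φ : Matrix (Fin d) (Fin d) ℂ →ₗ[ℂ] Matrix (Fin d) (Fin d) ℂ)
    (A B : Matrix (Fin n × Fin d) (Fin n × Fin d) ℂ) :
    ampliation Φ (A - B) = ampliation Φ A - ampliation Φ B := by
  ext p q
  rw [Matrix.sub_apply, ampliation_apply, ampliation_apply, ampliation_apply]
  have h : (Matrix.of fun i j => (A - B) (p.1, i) (q.1, j))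
      = (Matrix.of fun i j => A (p.1, i) (q.1, j)) - (Matrix.of fun i j => B (p.1, i) (q.1, j)) := by
    ext i j
    simp
  rw [h, map_sub]
  rfl

lemma ampliation_smul (Φ : Matrix (Fin d) (Fin d) ℂ →ₗ[ℂ] Matrix (Fin d) (Fin d) ℂ)
    (c : ℂ) (A : Matrix (Fin n × Fin d) (Fin n × Fin d) ℂ) :
    ampliation Φ (c • A) = c • ampliation Φ A := by
  ext p q
  rw [Matrix.smul_apply, ampliation_apply, ampliation_apply]
  have h : (Matrix.of fun i j => (c • A) (p.1, i) (q.1, j))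
      = c • (Matrix.of fun i j => A (p.1, i) (q.1, j)) := by
    ext i j
    simp
  rw [h, _root_.map_smul]
  rfl

lemma ampliation_conjTranspose {Φ : Matrix (Fin d) (Fin d) ℂ →ₗ[ℂ] Matrix (Fin d) (Fin d) ℂ}
    (hΦ : HermPreserving Φ) (A : Matrix (Fin n × Fin d) (Fin n × Fin d) ℂ) :
    (ampliation Φ A)ᴴ = ampliation Φ Aᴴ := by
  ext p q
  rw [Matrix.conjTranspose_apply, ampliation_apply, ampliation_apply]
  have h : (Matrix.of fun i j => Aᴴ (p.1, i) (q.1, j))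
      = (Matrix.of fun i j => A (q.1, i) (p.1, j))ᴴ := by
    ext i j
    simp [Matrix.conjTranspose_apply]
  rw [h, hΦ]
  rfl

lemma ampliation_trace {Φ : Matrix (Fin d) (Fin d) ℂ →ₗ[ℂ] Matrix (Fin d) (Fin d) ℂ}
    (hΦ : TracePreserving Φ) (A : Matrix (Fin n × Fin d) (Fin n × Fin d) ℂ) :
    (ampliation Φ A).trace = A.trace := by
  unfold Matrix.trace Matrix.diag
  rw [Fintype.sum_prod_type, Fintype.sum_prod_type]
  refine Finset.sum_congr rfl fun i _ => ?_
  have h := hΦ (Matrix.of fun a b => A (i, a) (i, b))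
  unfold Matrix.trace Matrix.diag at h
  exact h

lemma ampliation_comp (Φ Ψ : Matrix (Fin d) (Fin d) ℂ →ₗ[ℂ] Matrix (Fin d) (Fin d) ℂ)
    (A : Matrix (Fin n × Fin d) (Fin n × Fin d) ℂ) :
    ampliation Φ (ampliation Ψ A) = ampliation (Φ ∘ₗ Ψ) A := rfl

lemma ampliation_id (A : Matrix (Fin n × Fin d) (Fin n × Fin d) ℂ) :
    ampliation (LinearMap.id) A = A := rfl

lemma ampliation_cornerEmbed (Φ : Matrix (Fin d) (Fin d) ℂ →ₗ[ℂ] Matrix (Fin d) (Fin d) ℂ)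
    (a : Fin n) (τ : Matrix (Fin d) (Fin d) ℂ) :
    ampliation Φ (cornerEmbed a τ) = cornerEmbed a (Φ τ) := by
  ext p q
  rw [ampliation_apply, cornerEmbed_apply]
  by_cases h : p.1 = a ∧ q.1 = a
  · rw [if_pos h]
    have hb : (Matrix.of fun i j => cornerEmbed a τ (p.1, i) (q.1, j)) = τ := by
      ext i j
      simp [cornerEmbed_apply, h.1, h.2]
    rw [hb]
  · rw [if_neg h]
    have hb : (Matrix.of fun i j => cornerEmbed a τ (p.1, i) (q.1, j)) = 0 := by
      ext i j
      simp only [cornerEmbed_apply, Matrix.of_apply]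
      rw [if_neg h]
      rfl
    rw [hb, map_zero]
    rfl

end Ampl
section Conj
open Matrix
open scoped ComplexOrder

/-- `m ⊗ 1` as an explicit rectangular matrix. -/
def kronOne {n n' : ℕ} (d : ℕ) (m : Matrix (Fin n) (Fin n') ℂ) :
    Matrix (Fin n × Fin d) (Fin n' × Fin d) ℂ :=
  Matrix.of fun p q => if p.2 = q.2 then m p.1 q.1 else 0

lemma kronOne_conj_apply {n n' d : ℕ} (m : Matrix (Fin n) (Fin n') ℂ)
    (C : Matrix (Fin n × Fin d) (Fin n × Fin d) ℂ) (p q : Fin n' × Fin d) :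
    ((kronOne d m)ᴴ * C * (kronOne d m)) p q
      = ∑ a : Fin n, ∑ c : Fin n, star (m a p.1) * C (a, p.2) (c, q.2) * m c q.1 := by
  simp only [Matrix.mul_apply, kronOne, Matrix.conjTranspose_apply, Matrix.of_apply,
    Fintype.sum_prod_type, apply_ite (star : ℂ → ℂ), star_zero, ite_mul, zero_mul,
    mul_ite, mul_zero, Finset.sum_ite_eq', Finset.mem_univ, if_true, Finset.sum_mul,
    Finset.mul_sum]
  exact Finset.sum_comm

lemma ampliation_kronOne_conj {n n' d : ℕ}
    (Φ : Matrix (Fin d) (Fin d) ℂ →ₗ[ℂ] Matrix (Fin d) (Fin d) ℂ)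
    (m : Matrix (Fin n) (Fin n') ℂ) (A : Matrix (Fin n × Fin d) (Fin n × Fin d) ℂ) :
    ampliation Φ ((kronOne d m)ᴴ * A * (kronOne d m)) =
      (kronOne d m)ᴴ * ampliation Φ A * (kronOne d m) := by
  ext p q
  have hblock : (Matrix.of fun i j => ((kronOne d m)ᴴ * A * (kronOne d m)) (p.1, i) (q.1, j))
      = ∑ a : Fin n, ∑ c : Fin n,
          (star (m a p.1) * m c q.1) • (Matrix.of fun i' j' => A (a, i') (c, j')) := by
    ext i j
    rw [Matrix.of_apply, kronOne_conj_apply]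
    simp only [Matrix.sum_apply, Matrix.smul_apply, Matrix.of_apply, smul_eq_mul]
    refine Finset.sum_congr rfl fun a _ => Finset.sum_congr rfl fun c _ => ?_
    ring
  rw [ampliation_apply, hblock, map_sum, kronOne_conj_apply]
  simp only [map_sum, _root_.map_smul, Matrix.sum_apply, Matrix.smul_apply, smul_eq_mul]
  refine Finset.sum_congr rfl fun a _ => Finset.sum_congr rfl fun c _ => ?_
  rw [ampliation_apply]
  ring

lemma kronOne_conj_form {n n' d : ℕ}
    (C : Matrix (Fin n × Fin d) (Fin n × Fin d) ℂ) (m : Matrix (Fin n) (Fin n') ℂ)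
    (x : Fin n' × Fin d → ℂ) :
    star x ⬝ᵥ ((kronOne d m)ᴴ * C * (kronOne d m)) *ᵥ x
      = star ((kronOne d m) *ᵥ x) ⬝ᵥ C *ᵥ ((kronOne d m) *ᵥ x) := by
  rw [← Matrix.mulVec_mulVec, ← Matrix.mulVec_mulVec, Matrix.dotProduct_mulVec,
    ← Matrix.star_mulVec]
end Conj
section Bad
open Matrix
open scoped ComplexOrder

lemma exists_bad_psd {d : ℕ} (V : Matrix (Fin d) (Fin d) ℂ →ₗ[ℂ] Matrix (Fin d) (Fin d) ℂ)
    (hVH : HermPreserving V) (hVnotCP : ¬ CompletelyPositive V) :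
    ∃ A' : Matrix (Fin (d+1) × Fin d) (Fin (d+1) × Fin d) ℂ, A'.PosSemidef ∧
      (∀ p q : Fin (d+1) × Fin d, (p.1 = Fin.last d ∨ q.1 = Fin.last d) → A' p q = 0) ∧
      ¬ (ampliation V A').PosSemidef := by
  rw [CompletelyPositive] at hVnotCP
  push_neg at hVnotCP
  obtain ⟨n, hn, A, hA, hbad⟩ := hVnotCP
  have hherm : (ampliation V A).IsHermitian := by
    have h1 := ampliation_conjTranspose hVH A
    have h2 : Aᴴ = A := hA.1
    unfold Matrix.IsHermitian
    rw [h1, h2]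
  have hex : ∃ x, ¬ (0 ≤ star x ⬝ᵥ (ampliation V A) *ᵥ x) := by
    by_contra hc
    push_neg at hc
    exact hbad (Matrix.PosSemidef.of_dotProduct_mulVec_nonneg hherm hc)
  obtain ⟨x, hx⟩ := hex
  set mm : Matrix (Fin n) (Fin (d+1)) ℂ :=
    Matrix.of (fun a k => if h : (k : ℕ) < d then x (a, ⟨(k : ℕ), h⟩) else 0) with hmmdef
  have hmm_last : ∀ a : Fin n, mm a (Fin.last d) = 0 := by
    intro a
    rw [hmmdef]
    simp
  refine ⟨(kronOne d mm)ᴴ * A * (kronOne d mm),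
    hA.conjTranspose_mul_mul_same (kronOne d mm), ?_, ?_⟩
  · intro p q h
    rw [kronOne_conj_apply]
    refine Finset.sum_eq_zero fun a _ => Finset.sum_eq_zero fun c _ => ?_
    rcases h with h | h
    · rw [h, hmm_last a, star_zero, zero_mul, zero_mul]
    · rw [h, hmm_last c, mul_zero]
  · intro hpsd
    apply hx
    have h1 := hpsd.dotProduct_mulVec_nonneg (fun (p : Fin (d+1) × Fin d) =>
      if p.1 = Fin.castSucc p.2 then 1 else 0)
    rw [ampliation_kronOne_conj, kronOne_conj_form] at h1
    have h2 : (kronOne d mm) *ᵥ (fun (p : Fin (d+1) × Fin d) =>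
        if p.1 = Fin.castSucc p.2 then 1 else 0) = x := by
      funext p
      simp only [Matrix.mulVec, dotProduct, kronOne, Matrix.of_apply,
        Fintype.sum_prod_type, ite_mul, zero_mul, mul_ite, mul_zero, mul_one,
        Finset.sum_ite_eq, Finset.sum_ite_eq', Finset.mem_univ, if_true]
      rw [hmmdef]
      rw [Finset.sum_comm]
      simp only [Matrix.of_apply, Finset.sum_ite_eq', Finset.sum_ite_eq, Finset.mem_univ,
        if_true, Fin.coe_castSucc, Fin.is_lt, dif_pos, Fin.eta]
    rw [h2] at h1
    exact h1

end Bad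
section Decomp
open Matrix
open scoped ComplexOrder
variable {n : Type*} [Fintype n] [DecidableEq n]

lemma exists_states_of_traceless {H : Matrix n n ℂ} (hH : H.IsHermitian) (hH0 : H ≠ 0)
    (htr : H.trace = 0) :
    ∃ (c : ℝ) (ρ₁ ρ₂ : Matrix n n ℂ), 0 < c ∧ IsState ρ₁ ∧ IsState ρ₂ ∧
      H = (c : ℂ) • (ρ₁ - ρ₂) := by
  set lam := hH.eigenvalues with hlam
  set U := hH.eigenvectorUnitary with hU
  set P : Matrix n n ℂ := (U : Matrix n n ℂ) *
    Matrix.diagonal (fun i => ((max (lam i) 0 : ℝ) : ℂ)) * (star U : Matrix n n ℂ) with hP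
  set N : Matrix n n ℂ := (U : Matrix n n ℂ) *
    Matrix.diagonal (fun i => ((max (-lam i) 0 : ℝ) : ℂ)) * (star U : Matrix n n ℂ) with hN
  have hPpsd : P.PosSemidef := by
    apply Matrix.PosSemidef.mul_mul_conjTranspose_same
    refine Matrix.posSemidef_diagonal_iff.mpr fun i => ?_
    rw [Complex.le_def]
    simp [le_max_right]
  have hNpsd : N.PosSemidef := by
    apply Matrix.PosSemidef.mul_mul_conjTranspose_same
    refine Matrix.posSemidef_diagonal_iff.mpr fun i => ?_
    rw [Complex.le_def]
    simp [le_max_right]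
  have key : ∀ a : ℝ, max a 0 - max (-a) 0 = a := by
    intro a
    rcases le_total a 0 with h | h
    · rw [max_eq_right h, max_eq_left (by linarith)]
      ring
    · rw [max_eq_left h, max_eq_right (by linarith)]
      ring
  have hPN : P - N = H := by
    rw [hP, hN]
    conv_rhs => rw [hH.spectral_theorem, Unitary.conjStarAlgAut_apply]
    rw [← Matrix.sub_mul, ← Matrix.mul_sub, Matrix.diagonal_sub]
    congr 2
    refine congrArg Matrix.diagonal (funext fun i => ?_)
    rw [← Complex.ofReal_sub, key (lam i)]
    rfl
  have htrP : P.trace = ((∑ i, max (lam i) 0 : ℝ) : ℂ) := by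
    rw [hP, trace_conj_unitary, Matrix.trace_diagonal]
    push_cast
    rfl
  have htrN : N.trace = ((∑ i, max (-lam i) 0 : ℝ) : ℂ) := by
    rw [hN, trace_conj_unitary, Matrix.trace_diagonal]
    push_cast
    rfl
  have hsum : (∑ i, lam i) = 0 := by
    have h1 := hermitian_trace_eq_sum_eigen hH
    rw [htr] at h1
    have h2 : ((∑ i, lam i : ℝ) : ℂ) = 0 := by
      push_cast
      exact h1.symm
    exact_mod_cast h2
  have hceq : (∑ i, max (lam i) 0) = (∑ i, max (-lam i) 0) := by
    have h7 : (∑ i, max (lam i) 0) - (∑ i, max (-lam i) 0) = ∑ i, lam i := by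
      rw [← Finset.sum_sub_distrib]
      exact Finset.sum_congr rfl fun i _ => key (lam i)
    rw [hsum] at h7
    linarith
  set c : ℝ := ∑ i, max (lam i) 0 with hc
  have hcnonneg : 0 ≤ c := Finset.sum_nonneg fun i _ => le_max_right _ _
  have hcpos : 0 < c := by
    rcases lt_or_eq_of_le hcnonneg with h | h
    · exact h
    exfalso
    apply hH0
    have hzero : ∀ i, lam i = 0 := by
      intro i
      have h1 : ∀ j ∈ Finset.univ, max (lam j) 0 = 0 := by
        rw [← Finset.sum_eq_zero_iff_of_nonneg (fun j _ => le_max_right _ _)]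
        exact h.symm
      have h2 : ∀ j ∈ Finset.univ, max (-lam j) 0 = 0 := by
        rw [← Finset.sum_eq_zero_iff_of_nonneg (fun j _ => le_max_right _ _)]
        rw [← hceq]
        exact h.symm
      have h3 := h1 i (Finset.mem_univ i)
      have h4 := h2 i (Finset.mem_univ i)
      have h5 : lam i ≤ 0 := by
        by_contra hcon
        push_neg at hcon
        rw [max_eq_left (le_of_lt hcon)] at h3
        linarith
      have h6 : 0 ≤ lam i := by
        by_contra hcon
        push_neg at hcon
        rw [max_eq_left (by linarith)] at h4
        linarith
      linarith
    rw [← hPN, hP, hN]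
    have hd1 : Matrix.diagonal (fun i => ((max (lam i) 0 : ℝ) : ℂ)) = 0 := by
      ext i j
      by_cases hij : i = j
      · subst hij
        simp [hzero i]
      · simp [Matrix.diagonal_apply_ne _ hij]
    have hd2 : Matrix.diagonal (fun i => ((max (-lam i) 0 : ℝ) : ℂ)) = 0 := by
      ext i j
      by_cases hij : i = j
      · subst hij
        simp [hzero i]
      · simp [Matrix.diagonal_apply_ne _ hij]
    rw [hd1, hd2]
    simp
  refine ⟨c, ((c⁻¹ : ℝ) : ℂ) • P, ((c⁻¹ : ℝ) : ℂ) • N, hcpos, ?_, ?_, ?_⟩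
  · exact ⟨psd_smul_real hPpsd (by positivity), by
      rw [Matrix.trace_smul, htrP, smul_eq_mul, ← Complex.ofReal_mul,
        inv_mul_cancel₀ (ne_of_gt hcpos), Complex.ofReal_one]⟩
  · exact ⟨psd_smul_real hNpsd (by positivity), by
      rw [Matrix.trace_smul, htrN, ← hceq, smul_eq_mul, ← Complex.ofReal_mul,
        inv_mul_cancel₀ (ne_of_gt hcpos), Complex.ofReal_one]⟩
  · rw [smul_sub, smul_smul, smul_smul, ← Complex.ofReal_mul,
      mul_inv_cancel₀ (ne_of_gt hcpos)]
    rw [← hPN]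
    simp

end Decomp
section Misc
open Matrix
open scoped ComplexOrder
variable {n : Type*} [Fintype n] [DecidableEq n]

lemma psd_trace_re_pos {A : Matrix n n ℂ} (hA : A.PosSemidef) (h0 : A ≠ 0) :
    0 < A.trace.re := by
  have ht : A.trace.re = ∑ i, hA.1.eigenvalues i := by
    rw [hermitian_trace_eq_sum_eigen hA.1, Complex.re_sum]
    simp
  rw [ht]
  by_contra hc
  push_neg at hc
  have hle : (∑ i, hA.1.eigenvalues i) = 0 :=
    le_antisymm hc (Finset.sum_nonneg fun i _ => hA.eigenvalues_nonneg i)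
  have hall : ∀ i ∈ Finset.univ, hA.1.eigenvalues i = 0 := by
    rw [← Finset.sum_eq_zero_iff_of_nonneg (fun i _ => hA.eigenvalues_nonneg i)]
    exact hle
  apply h0
  have hd : Matrix.diagonal (RCLike.ofReal ∘ hA.1.eigenvalues) = (0 : Matrix n n ℂ) := by
    ext i j
    by_cases hij : i = j
    · subst hij
      simp [hall i (Finset.mem_univ i)]
    · simp [Matrix.diagonal_apply_ne _ hij]
  rw [hA.1.spectral_theorem, hd]
  simp

lemma hermitian_eq_psd_sub_psd {X : Matrix n n ℂ} (hX : X.IsHermitian) :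
    ∃ P N : Matrix n n ℂ, P.PosSemidef ∧ N.PosSemidef ∧ X = P - N := by
  refine ⟨(hX.eigenvectorUnitary : Matrix n n ℂ) *
      Matrix.diagonal (fun i => ((max (hX.eigenvalues i) 0 : ℝ) : ℂ)) *
      (star hX.eigenvectorUnitary : Matrix n n ℂ),
    (hX.eigenvectorUnitary : Matrix n n ℂ) *
      Matrix.diagonal (fun i => ((max (-hX.eigenvalues i) 0 : ℝ) : ℂ)) *
      (star hX.eigenvectorUnitary : Matrix n n ℂ), ?_, ?_, ?_⟩
  · apply Matrix.PosSemidef.mul_mul_conjTranspose_same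
    refine Matrix.posSemidef_diagonal_iff.mpr fun i => ?_
    rw [Complex.le_def]
    simp [le_max_right]
  · apply Matrix.PosSemidef.mul_mul_conjTranspose_same
    refine Matrix.posSemidef_diagonal_iff.mpr fun i => ?_
    rw [Complex.le_def]
    simp [le_max_right]
  · conv_lhs => rw [hX.spectral_theorem, Unitary.conjStarAlgAut_apply]
    rw [← Matrix.sub_mul, ← Matrix.mul_sub, Matrix.diagonal_sub]
    congr 2
    refine congrArg Matrix.diagonal (funext fun i => ?_)
    rw [← Complex.ofReal_sub]
    rw [show max (hX.eigenvalues i) 0 - max (-hX.eigenvalues i) 0 = hX.eigenvalues i by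
      rcases le_total (hX.eigenvalues i) 0 with h | h
      · rw [max_eq_right h, max_eq_left (by linarith)]
        ring
      · rw [max_eq_left h, max_eq_right (by linarith)]
        ring]
    rfl

lemma herm_of_posfun (f : Matrix n n ℂ → Matrix n n ℂ)
    (hadd : ∀ A B, f (A + B) = f A + f B)
    (hsmul : ∀ (c : ℂ) A, f (c • A) = c • f A)
    (hpos : ∀ A, A.PosSemidef → (f A).PosSemidef)
    (A : Matrix n n ℂ) : f Aᴴ = (f A)ᴴ := by
  have hsub : ∀ A B, f (A - B) = f A - f B := by
    intro A B
    rw [sub_eq_add_neg, sub_eq_add_neg, hadd, ← neg_one_smul ℂ B, hsmul, neg_one_smul]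
  have fherm : ∀ X, X.IsHermitian → (f X).IsHermitian := by
    intro X hX
    obtain ⟨P, N, hP, hN, hPN⟩ := hermitian_eq_psd_sub_psd hX
    rw [hPN, hsub]
    exact (hpos P hP).1.sub (hpos N hN).1
  have hstar1 : star (2⁻¹ : ℂ) = (2⁻¹ : ℂ) := by
    simp
  have hstar2 : star (-(2⁻¹) * Complex.I) = (2⁻¹ : ℂ) * Complex.I := by
    simp
  have hB : ((2⁻¹ : ℂ) • (A + Aᴴ)).IsHermitian := by
    unfold Matrix.IsHermitian
    rw [Matrix.conjTranspose_smul, Matrix.conjTranspose_add,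
      Matrix.conjTranspose_conjTranspose, hstar1, add_comm]
  have hC : ((-(2⁻¹) * Complex.I) • (A - Aᴴ)).IsHermitian := by
    unfold Matrix.IsHermitian
    rw [Matrix.conjTranspose_smul, Matrix.conjTranspose_sub,
      Matrix.conjTranspose_conjTranspose, hstar2]
    rw [show ((2⁻¹ : ℂ) * Complex.I) • (Aᴴ - A) = (-(2⁻¹) * Complex.I) • (A - Aᴴ) by
      rw [← neg_sub A Aᴴ, smul_neg, ← neg_smul]
      ring_nf]
  have hIC : Complex.I * (-(2⁻¹) * Complex.I) = (2⁻¹ : ℂ) := by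
    have h := Complex.I_mul_I
    calc Complex.I * (-(2⁻¹) * Complex.I) = -(2⁻¹) * (Complex.I * Complex.I) := by ring
    _ = (2⁻¹ : ℂ) := by rw [h]; ring
  have hIC2 : (-Complex.I) * (-(2⁻¹) * Complex.I) = -(2⁻¹ : ℂ) := by
    have h := Complex.I_mul_I
    calc (-Complex.I) * (-(2⁻¹) * Complex.I) = (2⁻¹) * (Complex.I * Complex.I) := by ring
    _ = -(2⁻¹ : ℂ) := by rw [h]; ring
  have hdecomp : A = (2⁻¹ : ℂ) • (A + Aᴴ) + Complex.I • ((-(2⁻¹) * Complex.I) • (A - Aᴴ)) := by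
    rw [smul_smul, hIC]
    module
  have hdecompH : Aᴴ = (2⁻¹ : ℂ) • (A + Aᴴ) +
      (-Complex.I) • ((-(2⁻¹) * Complex.I) • (A - Aᴴ)) := by
    rw [smul_smul, hIC2]
    module
  conv_lhs => rw [hdecompH, hadd, hsmul (-Complex.I)]
  conv_rhs => rw [hdecomp, hadd, hsmul Complex.I, Matrix.conjTranspose_add,
    Matrix.conjTranspose_smul, (fherm _ hB).eq, (fherm _ hC).eq]
  rw [show star Complex.I = -Complex.I from Complex.conj_I]

end Misc
section Ampl2
open Matrix
open scoped ComplexOrder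
variable {n d : ℕ}

lemma ampliation_add (Φ : Matrix (Fin d) (Fin d) ℂ →ₗ[ℂ] Matrix (Fin d) (Fin d) ℂ)
    (A B : Matrix (Fin n × Fin d) (Fin n × Fin d) ℂ) :
    ampliation Φ (A + B) = ampliation Φ A + ampliation Φ B := by
  ext p q
  rw [Matrix.add_apply, ampliation_apply, ampliation_apply, ampliation_apply]
  have h : (Matrix.of fun i j => (A + B) (p.1, i) (q.1, j))
      = (Matrix.of fun i j => A (p.1, i) (q.1, j)) + (Matrix.of fun i j => B (p.1, i) (q.1, j)) := by
    ext i j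
    simp
  rw [h, map_add]
  rfl

lemma ampliation_zero (Φ : Matrix (Fin d) (Fin d) ℂ →ₗ[ℂ] Matrix (Fin d) (Fin d) ℂ) :
    ampliation Φ (0 : Matrix (Fin n × Fin d) (Fin n × Fin d) ℂ) = 0 := by
  ext p q
  rw [ampliation_apply]
  have h : (Matrix.of fun i j => (0 : Matrix (Fin n × Fin d) (Fin n × Fin d) ℂ) (p.1, i) (q.1, j))
      = (0 : Matrix (Fin d) (Fin d) ℂ) := by
    ext i j
    simp
  rw [h, map_zero]
  rfl

lemma ampliation_injective {Λ : Matrix (Fin d) (Fin d) ℂ →ₗ[ℂ] Matrix (Fin d) (Fin d) ℂ}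
    (hinj : Function.Injective Λ)
    {X Y : Matrix (Fin n × Fin d) (Fin n × Fin d) ℂ}
    (hXY : ampliation Λ X = ampliation Λ Y) : X = Y := by
  ext p q
  have h2 : Λ (Matrix.of fun i j => X (p.1, i) (q.1, j))
      = Λ (Matrix.of fun i j => Y (p.1, i) (q.1, j)) := by
    ext i j
    have := congrFun (congrFun hXY (p.1, i)) (q.1, j)
    rw [ampliation_apply, ampliation_apply] at this
    exact this
  have h3 := hinj h2
  have h4 := congrFun (congrFun h3 p.2) q.2
  simpa using h4

end Ampl2

/-- Constructive witness: for a bijective CPTP map `Λ` and a trace-preserving,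
Hermiticity-preserving `V` that is not completely positive, there exist two states in the
image of the set of states under `I_{d+1} ⊗ Λ` whose trace-norm distance increases under
`I_{d+1} ⊗ V`. -/
theorem witness_states_in_image_exist (d : ℕ) (hd : 1 ≤ d)
    (Λ : Matrix (Fin d) (Fin d) ℂ →ₗ[ℂ] Matrix (Fin d) (Fin d) ℂ)
    (hΛTP : TracePreserving Λ) (hΛCP : CompletelyPositive Λ)
    (hΛbij : Function.Bijective Λ)
    (V : Matrix (Fin d) (Fin d) ℂ →ₗ[ℂ] Matrix (Fin d) (Fin d) ℂ)
    (hVTP : TracePreserving V) (hVH : HermPreserving V)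
    (hVnotCP : ¬ CompletelyPositive V) :
    ∃ ρ' ρ'' : Matrix (Fin (d+1) × Fin d) (Fin (d+1) × Fin d) ℂ,
      IsState ρ' ∧ IsState ρ'' ∧
      (∃ ρ, IsState ρ ∧ ampliation Λ ρ = ρ') ∧
      (∃ ρ, IsState ρ ∧ ampliation Λ ρ = ρ'') ∧
      traceNorm (ampliation V (ρ' - ρ'')) > traceNorm (ρ' - ρ'') := by
  classical
  obtain ⟨A', hA'psd, hA'supp, hA'bad⟩ := exists_bad_psd V hVH hVnotCP
  set e : Fin (d+1) := Fin.last d with he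
  have hA'ne : A' ≠ 0 := by
    intro h0
    apply hA'bad
    rw [h0, ampliation_zero]
    exact Matrix.PosSemidef.zero
  set t : ℝ := A'.trace.re with ht
  have htpos : 0 < t := psd_trace_re_pos hA'psd hA'ne
  have htrA' : A'.trace = (t : ℂ) := by
    have h1 : A'.trace = ((∑ i, hA'psd.1.eigenvalues i : ℝ) : ℂ) := by
      rw [hermitian_trace_eq_sum_eigen hA'psd.1]
      push_cast
      rfl
    rw [h1]
    congr 1
    rw [ht, h1]
    simp
  set σ₁ : Matrix (Fin (d+1) × Fin d) (Fin (d+1) × Fin d) ℂ := ((t⁻¹ : ℝ) : ℂ) • A' with hσ₁def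
  have hσ₁ : IsState σ₁ := by
    refine ⟨psd_smul_real hA'psd (by positivity), ?_⟩
    rw [hσ₁def, Matrix.trace_smul, htrA', smul_eq_mul, ← Complex.ofReal_mul,
      inv_mul_cancel₀ (ne_of_gt htpos), Complex.ofReal_one]
  set P : Fin (d+1) × Fin d → Prop := fun p => p.1 ≠ e with hP
  have hσ₁supp : ∀ p q, (¬ P p ∨ ¬ P q) → σ₁ p q = 0 := by
    intro p q h
    rw [hσ₁def, Matrix.smul_apply]
    have h2 : A' p q = 0 := by
      apply hA'supp
      rcases h with h | h
      · exact Or.inl (not_not.mp h)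
      · exact Or.inr (not_not.mp h)
    rw [h2, smul_zero]
  have hσ₁badV : ¬ (ampliation V σ₁).PosSemidef := by
    intro hpsd
    apply hA'bad
    have h1 : ampliation V A' = ((t : ℝ) : ℂ) • ampliation V σ₁ := by
      rw [← ampliation_smul]
      congr 1
      rw [hσ₁def, smul_smul, ← Complex.ofReal_mul, mul_inv_cancel₀ (ne_of_gt htpos),
        Complex.ofReal_one, one_smul]
    rw [h1]
    exact psd_smul_real hpsd (le_of_lt htpos)
  -- the extra-corner state
  set e0 : Fin d := ⟨0, hd⟩ with he0
  set τ : Matrix (Fin d) (Fin d) ℂ :=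
    Matrix.of (fun i j => if i = e0 ∧ j = e0 then (1 : ℂ) else 0) with hτdef
  have hτherm : τ.IsHermitian := by
    have h : τᴴ = τ := by
      ext i j
      rw [Matrix.conjTranspose_apply, hτdef]
      simp only [Matrix.of_apply]
      by_cases hij : i = e0 ∧ j = e0
      · rw [if_pos hij, if_pos ⟨hij.2, hij.1⟩, star_one]
      · rw [if_neg hij, if_neg (by tauto), star_zero]
    exact h
  have hτpsd : τ.PosSemidef := by
    refine Matrix.PosSemidef.of_dotProduct_mulVec_nonneg hτherm fun x => ?_
    have hform : star x ⬝ᵥ τ *ᵥ x = star (x e0) * x e0 := by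
      simp [dotProduct, Matrix.mulVec, hτdef, ite_and, ite_mul, zero_mul,
        mul_ite, mul_zero, Finset.sum_ite_eq, Finset.sum_ite_eq', Finset.mul_sum]
    rw [hform]
    exact star_mul_self_nonneg _
  have hτtr : τ.trace = 1 := by
    unfold Matrix.trace Matrix.diag
    rw [hτdef]
    simp [Finset.sum_ite_eq']
  set σ₂ : Matrix (Fin (d+1) × Fin d) (Fin (d+1) × Fin d) ℂ := cornerEmbed e τ with hσ₂def
  have hσ₂ : IsState σ₂ := ⟨cornerEmbed_psd e hτpsd, by rw [hσ₂def, cornerEmbed_trace, hτtr]⟩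
  have hσ₂supp : ∀ p q : Fin (d+1) × Fin d, (P p ∨ P q) → σ₂ p q = 0 := by
    intro p q h
    rw [hσ₂def, cornerEmbed_apply, if_neg (by tauto)]
  -- trace norm of the difference
  have hΔnorm : traceNorm (σ₁ - σ₂) = 2 := by
    have hZ : ∀ p q, (P p ∨ P q) → (-σ₂) p q = 0 := by
      intro p q h
      rw [Matrix.neg_apply, hσ₂supp p q h, neg_zero]
    rw [sub_eq_add_neg, traceNorm_add_orth P hσ₁supp hZ, traceNorm_neg,
      traceNorm_psd hσ₁.1, traceNorm_psd hσ₂.1, hσ₁.2, hσ₂.2]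
    norm_num
  -- trace norm of the image difference
  have hVΔ : traceNorm (ampliation V (σ₁ - σ₂)) > 2 := by
    have hXsupp : ∀ p q, (¬ P p ∨ ¬ P q) → (ampliation V σ₁) p q = 0 := by
      intro p q h
      rw [ampliation_apply]
      have hblock : (Matrix.of fun i j => σ₁ (p.1, i) (q.1, j)) = 0 := by
        ext i j
        have : σ₁ (p.1, i) (q.1, j) = 0 := by
          apply hσ₁supp
          rcases h with h | h
          · exact Or.inl h
          · exact Or.inr h
        simpa using this
      rw [hblock, map_zero]
      rfl
    have hZsupp : ∀ p q, (P p ∨ P q) → (-(ampliation V σ₂)) p q = 0 := by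
      intro p q h
      rw [Matrix.neg_apply, hσ₂def, ampliation_cornerEmbed, cornerEmbed_apply,
        if_neg (by tauto), neg_zero]
    have h1 : 1 < traceNorm (ampliation V σ₁) := by
      have hherm : (ampliation V σ₁).IsHermitian := by
        have h : (ampliation V σ₁)ᴴ = ampliation V σ₁ := by
          rw [ampliation_conjTranspose hVH, hσ₁.1.1.eq]
        exact h
      have htr1 : (ampliation V σ₁).trace = 1 := by
        rw [ampliation_trace hVTP, hσ₁.2]
      have h2 := trace_re_lt_traceNorm_of_not_psd hherm hσ₁badV
      rw [htr1] at h2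
      simpa using h2
    have h2 : 1 ≤ traceNorm (V τ) := by
      have hherm : (V τ).IsHermitian := by
        have h : (V τ)ᴴ = V τ := by
          rw [← hVH τ, hτherm.eq]
        exact h
      have htr1 : (V τ).trace = 1 := by
        rw [hVTP, hτtr]
      have h3 := trace_re_le_traceNorm hherm
      rw [htr1] at h3
      simpa using h3
    rw [ampliation_sub, sub_eq_add_neg, traceNorm_add_orth P hXsupp hZsupp, traceNorm_neg,
      hσ₂def, ampliation_cornerEmbed, traceNorm_cornerEmbed]
    linarith
  -- the inverse map
  set Leq := LinearEquiv.ofBijective Λ hΛbij with hLeq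
  set Linv : Matrix (Fin d) (Fin d) ℂ →ₗ[ℂ] Matrix (Fin d) (Fin d) ℂ := Leq.symm.toLinearMap
    with hLinvdef
  have hLinvcancel : ∀ X, Λ (Linv X) = X := fun X => Leq.apply_symm_apply X
  have hampcancel : ∀ Y : Matrix (Fin (d+1) × Fin d) (Fin (d+1) × Fin d) ℂ,
      ampliation Λ (ampliation Linv Y) = Y := by
    intro Y
    rw [ampliation_comp]
    have hcomp : Λ ∘ₗ Linv = LinearMap.id := LinearMap.ext fun X => hLinvcancel X
    rw [hcomp, ampliation_id]
  set H : Matrix (Fin (d+1) × Fin d) (Fin (d+1) × Fin d) ℂ := ampliation Linv (σ₁ - σ₂)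
    with hHdef
  have hampH : ampliation Λ H = σ₁ - σ₂ := hampcancel _
  have hHtrace : H.trace = 0 := by
    have hLinvTP : TracePreserving Linv := by
      intro A
      have h := hΛTP (Linv A)
      rw [hLinvcancel A] at h
      exact h.symm
    rw [hHdef, ampliation_trace hLinvTP, Matrix.trace_sub, hσ₁.2, hσ₂.2, sub_self]
  have hpos : ∀ A : Matrix (Fin (d+1) × Fin d) (Fin (d+1) × Fin d) ℂ,
      A.PosSemidef → (ampliation Λ A).PosSemidef :=
    fun A hA => hΛCP (d+1) (Nat.le_add_left 1 d) A hA
  have hHherm : H.IsHermitian := by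
    have hf := herm_of_posfun (fun X => ampliation Λ X) (ampliation_add Λ)
      (ampliation_smul Λ) hpos H
    have h : Hᴴ = H := by
      apply ampliation_injective hΛbij.1
      rw [hf, hampH, Matrix.conjTranspose_sub, hσ₁.1.1.eq, hσ₂.1.1.eq]
    exact h
  have hHne : H ≠ 0 := by
    intro h0
    have h1 : σ₁ - σ₂ = 0 := by
      rw [← hampH, h0, ampliation_zero]
    rw [h1] at hΔnorm
    have h2 : traceNorm (0 : Matrix (Fin (d+1) × Fin d) (Fin (d+1) × Fin d) ℂ) = 0 := by
      rw [traceNorm_psd Matrix.PosSemidef.zero]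
      simp
    rw [h2] at hΔnorm
    norm_num at hΔnorm
  obtain ⟨c, ρ₁, ρ₂, hcpos, hρ₁, hρ₂, hdec⟩ := exists_states_of_traceless hHherm hHne hHtrace
  refine ⟨ampliation Λ ρ₁, ampliation Λ ρ₂,
    ⟨hpos ρ₁ hρ₁.1, by rw [ampliation_trace hΛTP, hρ₁.2]⟩,
    ⟨hpos ρ₂ hρ₂.1, by rw [ampliation_trace hΛTP, hρ₂.2]⟩,
    ⟨ρ₁, hρ₁, rfl⟩, ⟨ρ₂, hρ₂, rfl⟩, ?_⟩
  have hdiff : ampliation Λ ρ₁ - ampliation Λ ρ₂ = ((c⁻¹ : ℝ) : ℂ) • (σ₁ - σ₂) := by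
    rw [← ampliation_sub]
    have h5 : ρ₁ - ρ₂ = ((c⁻¹ : ℝ) : ℂ) • H := by
      have h6 : ((c⁻¹ : ℝ) : ℂ) • H = ((c⁻¹ : ℝ) : ℂ) • ((c : ℝ) : ℂ) • (ρ₁ - ρ₂) := by
        rw [← hdec]
      rw [h6, smul_smul, ← Complex.ofReal_mul, inv_mul_cancel₀ (ne_of_gt hcpos),
        Complex.ofReal_one, one_smul]
    rw [h5, ampliation_smul, hampH]
  rw [hdiff, ampliation_smul, traceNorm_smul_real _ (by positivity),
    traceNorm_smul_real _ (by positivity), hΔnorm]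
  have hcinv : 0 < c⁻¹ := inv_pos.mpr hcpos
  exact mul_lt_mul_of_pos_left hVΔ hcinv
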